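/- arXiv:1811.06774 — 9 statements merged into one kernel-verified Lean document; each statement's English description precedes it below -/
import Mathlib

section
/- Under the stated hypotheses, ℓ(u₂) − ℓ(u₁) = (B₁(u₂, u₂) − B₂(u₂, u₂)) − B₁(u₁ − u₂, u₁ − u₂). -/
/-- Abstract variational identity behind the monotonicity inequality for the complete
electrode model in EIT. -/
theorem eit_variational_identity {H : Type*} [AddCommGroup H] [Module ℝ H]
    (B₁ B₂ : H →ₗ[ℝ] H →ₗ[ℝ] ℝ)
    (hB₁symm : ∀ u v, B₁ u v = B₁ v u) (hB₂symm : ∀ u v, B₂ u v = B₂ v u)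
    (ℓ : H →ₗ[ℝ] ℝ) (u₁ u₂ : H)
    (hu₁ : ∀ v, B₁ u₁ v = ℓ v) (hu₂ : ∀ v, B₂ u₂ v = ℓ v) :
    ℓ u₂ - ℓ u₁ = (B₁ u₂ u₂ - B₂ u₂ u₂) - B₁ (u₁ - u₂) (u₁ - u₂) := by
  have h1 := hu₁ u₁
  have h2 := hu₂ u₂
  have h3 := hu₁ u₂
  have h4 := hB₁symm u₁ u₂
  simp only [map_sub, LinearMap.sub_apply]
  linarith
end

section
/- Under the stated hypotheses, if in addition B₁ is positive semidefinite, then ℓ(u₂) − ℓ(u₁) ≤ B₁(u₂, u₂) − B₂(u₂, u₂). -/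
/-- Abstract form of the upper-bound inequality of the monotonicity inequality
(Theorem 2) for the complete electrode model in EIT. -/
theorem eit_monotonicity_upper_bound {H : Type*} [AddCommGroup H] [Module ℝ H]
    (B₁ B₂ : H →ₗ[ℝ] H →ₗ[ℝ] ℝ)
    (hB₁symm : ∀ u v, B₁ u v = B₁ v u) (hB₂symm : ∀ u v, B₂ u v = B₂ v u)
    (ℓ : H →ₗ[ℝ] ℝ) (u₁ u₂ : H)
    (hu₁ : ∀ v, B₁ u₁ v = ℓ v) (hu₂ : ∀ v, B₂ u₂ v = ℓ v)
    (hB₁pos : ∀ v, 0 ≤ B₁ v v) :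
    ℓ u₂ - ℓ u₁ ≤ B₁ u₂ u₂ - B₂ u₂ u₂ := by
  have key := hB₁pos (u₂ - u₁)
  have expand : B₁ (u₂ - u₁) (u₂ - u₁)
      = B₁ u₂ u₂ - 2 * ℓ u₂ + ℓ u₁ := by
    simp only [map_sub, LinearMap.sub_apply]
    rw [hB₁symm u₂ u₁, hu₁, hu₁]
    ring
  have h2 : B₂ u₂ u₂ = ℓ u₂ := hu₂ u₂
  linarith
end

section
/- Under the stated hypotheses, ℓ(u₂) − ℓ(u₁) = B₂(u₂ − u₁, u₂ − u₁) + (B₁(u₁, u₁) − B₂(u₁, u₁)). -/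
/-- Abstract variational identity (with interchanged roles of the forms) behind the
lower-bound inequality of the monotonicity inequality for EIT. -/
theorem eit_variational_identity' {H : Type*} [AddCommGroup H] [Module ℝ H]
    (B₁ B₂ : H →ₗ[ℝ] H →ₗ[ℝ] ℝ)
    (hB₁symm : ∀ u v, B₁ u v = B₁ v u) (hB₂symm : ∀ u v, B₂ u v = B₂ v u)
    (ℓ : H →ₗ[ℝ] ℝ) (u₁ u₂ : H)
    (hu₁ : ∀ v, B₁ u₁ v = ℓ v) (hu₂ : ∀ v, B₂ u₂ v = ℓ v) :
    ℓ u₂ - ℓ u₁ = B₂ (u₂ - u₁) (u₂ - u₁) + (B₁ u₁ u₁ - B₂ u₁ u₁) := by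
  have h1 := hu₁ u₁
  have h2 := hu₂ u₂
  have h3 := hu₂ u₁
  have h4 : B₂ u₁ u₂ = ℓ u₁ := by rw [hB₂symm, h3]
  simp only [map_sub, LinearMap.sub_apply]
  linarith
end

section
/- Under the stated hypotheses, if in addition B₁ is positive semidefinite and B₂(v, v) ≥ B₁(v, v) for all v ∈ H, then ℓ(u₂) ≤ ℓ(u₁). -/
/-- Abstract form of the monotonicity relation (Theorem 1) for EIT:
a larger energy form yields smaller measurements. -/
theorem eit_monotonicity_relation {H : Type*} [AddCommGroup H] [Module ℝ H]
    (B₁ B₂ : H →ₗ[ℝ] H →ₗ[ℝ] ℝ)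
    (hB₁symm : ∀ u v, B₁ u v = B₁ v u) (hB₂symm : ∀ u v, B₂ u v = B₂ v u)
    (ℓ : H →ₗ[ℝ] ℝ) (u₁ u₂ : H)
    (hu₁ : ∀ v, B₁ u₁ v = ℓ v) (hu₂ : ∀ v, B₂ u₂ v = ℓ v)
    (hB₁pos : ∀ v, 0 ≤ B₁ v v) (hle : ∀ v, B₁ v v ≤ B₂ v v) :
    ℓ u₂ ≤ ℓ u₁ := by
  have h0 := hB₁pos (u₁ - u₂)
  have hexp : B₁ (u₁ - u₂) (u₁ - u₂)
      = ℓ u₁ - 2 * ℓ u₂ + B₁ u₂ u₂ := by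
    simp only [map_sub, LinearMap.sub_apply]
    rw [hu₁ u₁, hu₁ u₂, hB₁symm u₂ u₁, hu₁ u₂]
    ring
  have h1 : B₁ u₂ u₂ ≤ ℓ u₂ := by
    have := hle u₂
    rwa [hu₂ u₂] at this
  linarith [h0, hexp ▸ h0]
end

section
/- Under the stated hypotheses, if w₁(k) > 0 and w₂(k) ≥ 0 for all k ∈ ι, then ℓ(u₂) − ℓ(u₁) ≥ ∑_{k∈ι} (w₂(k)/w₁(k))·(w₁(k) − w₂(k))·‖g k u₂‖². -/
open scoped RealInnerProductSpace

/-- Abstract (discretized) form of the lower-bound inequality of the monotonicity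
inequality (Theorem 2) for the complete electrode model in EIT. -/
theorem eit_discrete_monotonicity_lower_bound {H E : Type*} [AddCommGroup H] [Module ℝ H]
    [NormedAddCommGroup E] [InnerProductSpace ℝ E] {ι : Type*} [Fintype ι]
    (g : ι → H →ₗ[ℝ] E) (w₁ w₂ : ι → ℝ) (ℓ : H →ₗ[ℝ] ℝ) (u₁ u₂ : H)
    (hu₁ : ∀ v, ∑ k, w₁ k * ⟪g k u₁, g k v⟫ = ℓ v)
    (hu₂ : ∀ v, ∑ k, w₂ k * ⟪g k u₂, g k v⟫ = ℓ v)
    (hw₁ : ∀ k, 0 < w₁ k) (hw₂ : ∀ k, 0 ≤ w₂ k) :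
    ℓ u₂ - ℓ u₁ ≥ ∑ k, (w₂ k / w₁ k) * (w₁ k - w₂ k) * ‖g k u₂‖ ^ 2 := by
  have key : ℓ u₂ - ℓ u₁ =
      ∑ k, (w₂ k * ⟪g k u₂, g k u₂⟫ + w₁ k * ⟪g k u₁, g k u₁⟫
        - 2 * (w₂ k * ⟪g k u₂, g k u₁⟫)) := by
    rw [Finset.sum_sub_distrib, Finset.sum_add_distrib, hu₂ u₂, hu₁ u₁,
      ← Finset.mul_sum, hu₂ u₁]
    ring
  rw [key]
  apply Finset.sum_le_sum
  intro k _
  have hcs : ⟪g k u₂, g k u₁⟫ ≤ ‖g k u₁‖ * ‖g k u₂‖ := by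
    calc ⟪g k u₂, g k u₁⟫ ≤ ‖g k u₂‖ * ‖g k u₁‖ := real_inner_le_norm _ _
    _ = ‖g k u₁‖ * ‖g k u₂‖ := mul_comm _ _
  rw [real_inner_self_eq_norm_sq, real_inner_self_eq_norm_sq]
  have h1 := hw₁ k
  have h2 := hw₂ k
  have hn1 : (0:ℝ) ≤ ‖g k u₁‖ := norm_nonneg _
  have hn2 : (0:ℝ) ≤ ‖g k u₂‖ := norm_nonneg _
  have hdiv : w₂ k / w₁ k * (w₁ k - w₂ k) * ‖g k u₂‖ ^ 2 * w₁ k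
      = w₂ k * (w₁ k - w₂ k) * ‖g k u₂‖ ^ 2 := by
    field_simp
  nlinarith [sq_nonneg (w₁ k * ‖g k u₁‖ - w₂ k * ‖g k u₂‖),
    mul_nonneg h2 (mul_nonneg hn1 hn2), mul_le_mul_of_nonneg_left hcs h2]
end

section
/- Under the stated hypotheses, if w₁(k) ≥ 0 for all k ∈ ι, then ℓ(u₂) − ℓ(u₁) ≤ ∑_{k∈ι} (w₁(k) − w₂(k))·‖g k u₂‖². -/
open scoped RealInnerProductSpace

/-- Abstract (discretized) form of the upper-bound inequality of the monotonicity
inequality (Theorem 2) for the complete electrode model in EIT. -/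
theorem eit_discrete_monotonicity_upper_bound {H E : Type*} [AddCommGroup H] [Module ℝ H]
    [NormedAddCommGroup E] [InnerProductSpace ℝ E] {ι : Type*} [Fintype ι]
    (g : ι → H →ₗ[ℝ] E) (w₁ w₂ : ι → ℝ) (ℓ : H →ₗ[ℝ] ℝ) (u₁ u₂ : H)
    (hu₁ : ∀ v, ∑ k, w₁ k * ⟪g k u₁, g k v⟫ = ℓ v)
    (hu₂ : ∀ v, ∑ k, w₂ k * ⟪g k u₂, g k v⟫ = ℓ v)
    (hw₁ : ∀ k, 0 ≤ w₁ k) :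
    ℓ u₂ - ℓ u₁ ≤ ∑ k, (w₁ k - w₂ k) * ‖g k u₂‖ ^ 2 := by
  have h0 : 0 ≤ ∑ k, w₁ k * (‖g k u₂‖ ^ 2 - 2 * ⟪g k u₁, g k u₂⟫ + ‖g k u₁‖ ^ 2) := by
    apply Finset.sum_nonneg
    intro k _
    have : ‖g k u₂‖ ^ 2 - 2 * ⟪g k u₁, g k u₂⟫ + ‖g k u₁‖ ^ 2
        = ‖g k u₂ - g k u₁‖ ^ 2 := by
      rw [norm_sub_sq_real, real_inner_comm]
    rw [this]
    exact mul_nonneg (hw₁ k) (sq_nonneg _)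
  have hsplit : ∑ k, w₁ k * (‖g k u₂‖ ^ 2 - 2 * ⟪g k u₁, g k u₂⟫ + ‖g k u₁‖ ^ 2)
      = (∑ k, w₁ k * ‖g k u₂‖ ^ 2) - 2 * (∑ k, w₁ k * ⟪g k u₁, g k u₂⟫)
        + ∑ k, w₁ k * ‖g k u₁‖ ^ 2 := by
    rw [Finset.mul_sum, ← Finset.sum_sub_distrib, ← Finset.sum_add_distrib]
    congr 1; ext k; ring
  have h1 : ∑ k, w₁ k * ⟪g k u₁, g k u₂⟫ = ℓ u₂ := hu₁ u₂
  have h2 : ∑ k, w₁ k * ‖g k u₁‖ ^ 2 = ℓ u₁ := by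
    rw [← hu₁ u₁]
    congr 1; ext k; rw [real_inner_self_eq_norm_sq]
  have h3 : ∑ k, w₂ k * ‖g k u₂‖ ^ 2 = ℓ u₂ := by
    rw [← hu₂ u₂]
    congr 1; ext k; rw [real_inner_self_eq_norm_sq]
  have h4 : ∑ k, (w₁ k - w₂ k) * ‖g k u₂‖ ^ 2
      = (∑ k, w₁ k * ‖g k u₂‖ ^ 2) - ∑ k, w₂ k * ‖g k u₂‖ ^ 2 := by
    rw [← Finset.sum_sub_distrib]; congr 1; ext k; ring
  rw [hsplit, h1, h2] at h0
  rw [h4, h3]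
  linarith
end

section
/- Under the stated hypotheses, suppose s₀ > 0, s_max > 0, c ≥ 0, the weight w₂ is constant equal to s₀, and the weight w₁ satisfies s₀ ≤ w₁(k) ≤ s_max for all k ∈ ι and w₁(k) − s₀ ≥ c for all k in a subset S ⊆ ι. Then ℓ(u₂) − ℓ(u₁) ≥ (s₀·c/s_max)·∑_{k∈S} ‖g k u₂‖². -/
open scoped RealInnerProductSpace

/-- Pointwise key inequality: `s₀‖y-x‖² + (a-s₀)‖x‖² ≥ (s₀c/s_max)‖y‖²`. -/
lemma eit_pointwise {E : Type*} [NormedAddCommGroup E] [InnerProductSpace ℝ E]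
    (s₀ s_max c a : ℝ) (hs₀ : 0 < s₀) (hsmax : 0 < s_max) (hc : 0 ≤ c)
    (ha : s₀ ≤ a) (ha' : a ≤ s_max) (hca : c ≤ a - s₀) (x y : E) :
    (s₀ * c / s_max) * ‖y‖ ^ 2 ≤ s₀ * ‖y - x‖ ^ 2 + (a - s₀) * ‖x‖ ^ 2 := by
  have ha0 : 0 < a := hs₀.trans_le ha
  have hexp : (0:ℝ) ≤ a ^ 2 * ‖x‖ ^ 2 - 2 * (a * s₀) * ⟪x, y⟫ + s₀ ^ 2 * ‖y‖ ^ 2 := by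
    have h := sq_nonneg ‖a • x - s₀ • y‖
    rw [norm_sub_sq_real, real_inner_smul_left, real_inner_smul_right, norm_smul, norm_smul,
      mul_pow, mul_pow, Real.norm_eq_abs, Real.norm_eq_abs, sq_abs, sq_abs] at h
    nlinarith [h]
  have hyx : ‖y - x‖ ^ 2 = ‖y‖ ^ 2 - 2 * ⟪y, x⟫ + ‖x‖ ^ 2 := norm_sub_sq_real y x
  have hcomm : ⟪y, x⟫ = ⟪x, y⟫ := real_inner_comm x y
  have hmain : s₀ * (a - s₀) / a * ‖y‖ ^ 2 ≤ s₀ * ‖y - x‖ ^ 2 + (a - s₀) * ‖x‖ ^ 2 := by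
    rw [div_mul_eq_mul_div, div_le_iff₀ ha0, hyx, hcomm]
    nlinarith [hexp]
  have hdiv : s₀ * c / s_max ≤ s₀ * (a - s₀) / a := by
    rw [div_le_div_iff₀ hsmax ha0]
    nlinarith [mul_nonneg (mul_nonneg hs₀.le (sub_nonneg.mpr hca)) ha0.le,
      mul_nonneg (mul_nonneg hs₀.le (by linarith : (0:ℝ) ≤ a - s₀)) (by linarith : (0:ℝ) ≤ s_max - a)]
  have hy : (0:ℝ) ≤ ‖y‖ ^ 2 := sq_nonneg _
  calc (s₀ * c / s_max) * ‖y‖ ^ 2 ≤ s₀ * (a - s₀) / a * ‖y‖ ^ 2 :=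
        mul_le_mul_of_nonneg_right hdiv hy
    _ ≤ _ := hmain

/-- Abstract (discretized) key estimate in the proof of Theorem 4 (linearized
monotonicity test for inclusions more conductive than the background). -/
theorem eit_linearized_test_estimate {H E : Type*} [AddCommGroup H] [Module ℝ H]
    [NormedAddCommGroup E] [InnerProductSpace ℝ E] {ι : Type*} [Fintype ι]
    (g : ι → H →ₗ[ℝ] E) (w₁ w₂ : ι → ℝ) (ℓ : H →ₗ[ℝ] ℝ) (u₁ u₂ : H)
    (hu₁ : ∀ v, ∑ k, w₁ k * ⟪g k u₁, g k v⟫ = ℓ v)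
    (hu₂ : ∀ v, ∑ k, w₂ k * ⟪g k u₂, g k v⟫ = ℓ v)
    (s₀ s_max c : ℝ) (hs₀ : 0 < s₀) (hsmax : 0 < s_max) (hc : 0 ≤ c)
    (hw₂ : ∀ k, w₂ k = s₀)
    (hw₁l : ∀ k, s₀ ≤ w₁ k) (hw₁u : ∀ k, w₁ k ≤ s_max)
    (S : Finset ι) (hS : ∀ k ∈ S, w₁ k - s₀ ≥ c) :
    ℓ u₂ - ℓ u₁ ≥ (s₀ * c / s_max) * ∑ k ∈ S, ‖g k u₂‖ ^ 2 := by
  -- the fundamental energy identity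
  have key : ℓ u₂ - ℓ u₁
      = ∑ k, (w₂ k * ‖g k u₂ - g k u₁‖ ^ 2 + (w₁ k - w₂ k) * ‖g k u₁‖ ^ 2) := by
    have hterm : ∀ k, w₂ k * ‖g k u₂ - g k u₁‖ ^ 2 + (w₁ k - w₂ k) * ‖g k u₁‖ ^ 2
        = w₂ k * ⟪g k u₂, g k u₂⟫ - 2 * (w₂ k * ⟪g k u₂, g k u₁⟫)
          + w₁ k * ⟪g k u₁, g k u₁⟫ := by
      intro k
      rw [norm_sub_sq_real, ← real_inner_self_eq_norm_sq, ← real_inner_self_eq_norm_sq]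
      ring
    rw [Finset.sum_congr rfl (fun k _ => hterm k), Finset.sum_add_distrib,
      Finset.sum_sub_distrib, ← Finset.mul_sum, hu₂ u₂, hu₂ u₁, hu₁ u₁]
    ring
  rw [ge_iff_le, key, Finset.mul_sum]
  have hstep1 : ∑ k ∈ S, (s₀ * c / s_max) * ‖g k u₂‖ ^ 2
      ≤ ∑ k ∈ S, (w₂ k * ‖g k u₂ - g k u₁‖ ^ 2 + (w₁ k - w₂ k) * ‖g k u₁‖ ^ 2) := by
    refine Finset.sum_le_sum fun k hk => ?_
    rw [hw₂ k]
    exact eit_pointwise s₀ s_max c (w₁ k) hs₀ hsmax hc (hw₁l k) (hw₁u k) (hS k hk) _ _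
  refine hstep1.trans (Finset.sum_le_sum_of_subset_of_nonneg (Finset.subset_univ S)
    fun k _ _ => ?_)
  have h1 : (0:ℝ) ≤ w₂ k := (hw₂ k).symm ▸ hs₀.le
  have h2 : (0:ℝ) ≤ w₁ k - w₂ k := by rw [hw₂ k]; linarith [hw₁l k]
  positivity
end

section
/- Under the stated hypotheses, suppose s₀ > 0, c ≥ 0, the weight w₂ is constant equal to s₀, and the weight w₁ satisfies 0 ≤ w₁(k) ≤ s₀ for all k ∈ ι and w₁(k) ≤ s₀ − c for all k in a subset S ⊆ ι. Then ℓ(u₂) − ℓ(u₁) ≤ −c·∑_{k∈S} ‖g k u₂‖². -/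
open scoped RealInnerProductSpace

/-- Abstract (discretized) key estimate in the proof of Theorem 6 (linearized
monotonicity test for inclusions less conductive than the background). -/
theorem eit_linearized_test_estimate_less_conductive {H E : Type*} [AddCommGroup H]
    [Module ℝ H] [NormedAddCommGroup E] [InnerProductSpace ℝ E] {ι : Type*} [Fintype ι]
    (g : ι → H →ₗ[ℝ] E) (w₁ w₂ : ι → ℝ) (ℓ : H →ₗ[ℝ] ℝ) (u₁ u₂ : H)
    (hu₁ : ∀ v, ∑ k, w₁ k * ⟪g k u₁, g k v⟫ = ℓ v)
    (hu₂ : ∀ v, ∑ k, w₂ k * ⟪g k u₂, g k v⟫ = ℓ v)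
    (s₀ c : ℝ) (hs₀ : 0 < s₀) (hc : 0 ≤ c)
    (hw₂ : ∀ k, w₂ k = s₀)
    (hw₁l : ∀ k, 0 ≤ w₁ k) (hw₁u : ∀ k, w₁ k ≤ s₀)
    (S : Finset ι) (hS : ∀ k ∈ S, w₁ k ≤ s₀ - c) :
    ℓ u₂ - ℓ u₁ ≤ -c * ∑ k ∈ S, ‖g k u₂‖ ^ 2 := by
  have expand : ∀ k : ι, w₁ k * ⟪g k (u₁ - u₂), g k (u₁ - u₂)⟫ =
      w₁ k * ⟪g k u₁, g k u₁⟫ - 2 * (w₁ k * ⟪g k u₁, g k u₂⟫)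
      + w₁ k * ⟪g k u₂, g k u₂⟫ := by
    intro k
    rw [map_sub, inner_sub_left, inner_sub_right, inner_sub_right,
      real_inner_comm (g k u₂) (g k u₁)]
    ring
  have hQ : ∑ k, w₁ k * ⟪g k (u₁ - u₂), g k (u₁ - u₂)⟫ =
      ℓ u₁ - 2 * ℓ u₂ + ∑ k, w₁ k * ⟪g k u₂, g k u₂⟫ := by
    simp only [expand, Finset.sum_add_distrib, Finset.sum_sub_distrib,
      ← Finset.mul_sum, hu₁ u₁, hu₁ u₂]
  have hQ0 : 0 ≤ ∑ k, w₁ k * ⟪g k (u₁ - u₂), g k (u₁ - u₂)⟫ :=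
    Finset.sum_nonneg fun k _ => mul_nonneg (hw₁l k) real_inner_self_nonneg
  have hA₂ : ℓ u₂ = ∑ k, w₂ k * ⟪g k u₂, g k u₂⟫ := (hu₂ u₂).symm
  have key : ℓ u₂ - ℓ u₁ ≤ -∑ k, (w₂ k - w₁ k) * ⟪g k u₂, g k u₂⟫ := by
    have : ℓ u₂ - ℓ u₁ = -(∑ k, w₁ k * ⟪g k (u₁ - u₂), g k (u₁ - u₂)⟫)
        - ∑ k, (w₂ k - w₁ k) * ⟪g k u₂, g k u₂⟫ := by
      rw [hQ]
      simp only [sub_mul, Finset.sum_sub_distrib, ← hA₂]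
      ring
    linarith
  have step : ∑ k ∈ S, c * ‖g k u₂‖ ^ 2 ≤ ∑ k, (w₂ k - w₁ k) * ⟪g k u₂, g k u₂⟫ := by
    have h1 : ∑ k ∈ S, c * ‖g k u₂‖ ^ 2 ≤ ∑ k ∈ S, (w₂ k - w₁ k) * ⟪g k u₂, g k u₂⟫ := by
      refine Finset.sum_le_sum fun k hk => ?_
      rw [real_inner_self_eq_norm_sq]
      have := hS k hk
      have hw := hw₂ k
      nlinarith [sq_nonneg ‖g k u₂‖]
    refine h1.trans (Finset.sum_le_sum_of_subset_of_nonneg (Finset.subset_univ S)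
      fun k _ _ => ?_)
    exact mul_nonneg (by rw [hw₂ k]; linarith [hw₁u k]) real_inner_self_nonneg
  calc ℓ u₂ - ℓ u₁ ≤ -∑ k, (w₂ k - w₁ k) * ⟪g k u₂, g k u₂⟫ := key
    _ ≤ -∑ k ∈ S, c * ‖g k u₂‖ ^ 2 := by linarith
    _ = -c * ∑ k ∈ S, ‖g k u₂‖ ^ 2 := by rw [← Finset.mul_sum]; ring
end

section
/- Let A₁, …, A_N, B be real symmetric n×n matrices and δ ≥ 0. Suppose that for every s ∈ {1, …, N} the matrix A_s − B + 2δ·Id is not positive semidefinite (equivalently, the minimal eigenvalue of A_s − B is < −2δ). Then for every real symmetric matrix R with B ⪯ R and every real symmetric matrix R_δ with ‖R − R_δ‖ ≤ δ, there is no s ∈ {1, …, N} with R_δ ⪯ A_s + δ·Id. -/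
open scoped Matrix.Norms.L2Operator
open Matrix

lemma aux_norm_psd {n : ℕ} {M : Matrix (Fin n) (Fin n) ℝ} {δ : ℝ}
    (hM : M.IsHermitian) (h : ‖M‖ ≤ δ) :
    (δ • (1 : Matrix (Fin n) (Fin n) ℝ) - M).PosSemidef := by
  have hsmul : (δ • (1 : Matrix (Fin n) (Fin n) ℝ)).IsHermitian := by
    simp [Matrix.IsHermitian, Matrix.conjTranspose_smul]
  rw [Matrix.posSemidef_iff_dotProduct_mulVec]
  constructor
  · exact hsmul.sub hM
  · intro x
    have key : star x ⬝ᵥ M *ᵥ x ≤ δ * (star x ⬝ᵥ x) := by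
      set y : EuclideanSpace ℝ (Fin n) := (WithLp.equiv 2 _).symm x with hy
      have h1 : star x ⬝ᵥ M *ᵥ x =
          inner ℝ y ((EuclideanSpace.equiv (Fin n) ℝ).symm (M *ᵥ x)) := by
        simp only [EuclideanSpace.inner_eq_star_dotProduct, dotProduct, mul_comm, hy,
          WithLp.equiv, star]
        rfl
      have h2 : star x ⬝ᵥ x = ‖y‖ ^ 2 := by
        rw [← real_inner_self_eq_norm_sq]
        simp only [EuclideanSpace.inner_eq_star_dotProduct, dotProduct, hy,
          WithLp.equiv, star]
        rfl
      rw [h1, h2]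
      calc inner ℝ y ((EuclideanSpace.equiv (Fin n) ℝ).symm (M *ᵥ x))
          ≤ ‖y‖ * ‖(EuclideanSpace.equiv (Fin n) ℝ).symm (M *ᵥ x)‖ :=
            real_inner_le_norm _ _
        _ ≤ ‖y‖ * (‖M‖ * ‖y‖) :=
            mul_le_mul_of_nonneg_left (M.l2_opNorm_mulVec y) (norm_nonneg _)
        _ ≤ ‖y‖ * (δ * ‖y‖) :=
            mul_le_mul_of_nonneg_left
              (mul_le_mul_of_nonneg_right h (norm_nonneg _)) (norm_nonneg _)
        _ = δ * ‖y‖ ^ 2 := by ring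
    have hexp : star x ⬝ᵥ (δ • (1 : Matrix (Fin n) (Fin n) ℝ) - M) *ᵥ x =
        δ * (star x ⬝ᵥ x) - star x ⬝ᵥ M *ᵥ x := by
      simp [Matrix.sub_mulVec, dotProduct_sub, Matrix.smul_mulVec,
        dotProduct_smul, smul_eq_mul]
    rw [hexp]
    linarith

/-- Abstract verification criterion of Theorem 3: if for every `s` the matrix
`A s − B + 2δ·Id` is not positive semidefinite, then in the anomaly-free case
(`B ⪯ R`) with noise level `δ` no resolution element is marked by the
monotonicity test `R_δ ⪯ A s + δ·Id`. -/
theorem eit_resolution_guarantee_criterion {n N : ℕ}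
    (A : Fin N → Matrix (Fin n) (Fin n) ℝ) (B : Matrix (Fin n) (Fin n) ℝ)
    (hA : ∀ s, (A s).IsHermitian) (hB : B.IsHermitian)
    (δ : ℝ) (hδ : 0 ≤ δ)
    (hcrit : ∀ s, ¬ (A s - B + (2 * δ) • (1 : Matrix (Fin n) (Fin n) ℝ)).PosSemidef) :
    ∀ R Rδ : Matrix (Fin n) (Fin n) ℝ, R.IsHermitian → Rδ.IsHermitian →
      (R - B).PosSemidef → ‖R - Rδ‖ ≤ δ →
      ¬ ∃ s, (A s + δ • (1 : Matrix (Fin n) (Fin n) ℝ) - Rδ).PosSemidef := by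
  rintro R Rδ hR hRδ hRB hnorm ⟨s, hs⟩
  apply hcrit s
  have h1 : (δ • (1 : Matrix (Fin n) (Fin n) ℝ) - (R - Rδ)).PosSemidef :=
    aux_norm_psd (hR.sub hRδ) hnorm
  have heq : A s - B + (2 * δ) • (1 : Matrix (Fin n) (Fin n) ℝ) =
      (A s + δ • (1 : Matrix (Fin n) (Fin n) ℝ) - Rδ) +
      (δ • (1 : Matrix (Fin n) (Fin n) ℝ) - (R - Rδ)) + (R - B) := by
    module
  rw [heq]
  exact (hs.add h1).add hRB
end
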